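/- arXiv:2602.03071 — 4 statements merged into one kernel-verified Lean document; each statement's English description precedes it below -/
import Mathlib

section
/- For 0 < λ < 1 and w > 0, the optimal objective value J(s*,e*) = √(2π)·w·erf(√(-ln λ)) - 2λw√(-2 ln λ) is strictly positive. -/
noncomputable def erf (z : ℝ) : ℝ := (2 / Real.sqrt Real.pi) * ∫ t in (0:ℝ)..z, Real.exp (-t^2)

theorem optimal_objective_positive (w lam : ℝ) (hw : 0 < w) (hlam0 : 0 < lam) (hlam1 : lam < 1) :
    0 < Real.sqrt (2 * Real.pi) * w * erf (Real.sqrt (-Real.log lam)) -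
        2 * lam * w * Real.sqrt (-2 * Real.log lam) := by
  have hlog : Real.log lam < 0 := Real.log_neg hlam0 hlam1
  set a := Real.sqrt (-Real.log lam) with ha_def
  have ha : 0 < a := Real.sqrt_pos.2 (by linarith)
  have ha2 : a ^ 2 = -Real.log lam := Real.sq_sqrt (by linarith)
  have hlam_eq : lam = Real.exp (-a ^ 2) := by
    rw [ha2, neg_neg, Real.exp_log hlam0]
  -- key integral inequality
  have hkey : a * Real.exp (-a ^ 2) < ∫ t in (0:ℝ)..a, Real.exp (-t ^ 2) := by
    have h := intervalIntegral.integral_lt_integral_of_continuousOn_of_le_of_exists_lt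
      (f := fun _ => Real.exp (-a ^ 2)) (g := fun t => Real.exp (-t ^ 2)) (a := 0) (b := a)
      ha continuousOn_const
      ((Real.continuous_exp.comp (continuous_pow 2).neg).continuousOn)
      (fun x hx => by
        apply Real.exp_le_exp.2
        have hx0 : 0 ≤ x := le_of_lt hx.1
        nlinarith [hx.2, hx.1])
      ⟨0, ⟨le_refl 0, ha.le⟩, by
        show Real.exp (-a ^ 2) < Real.exp (-(0:ℝ) ^ 2)
        apply Real.exp_lt_exp.2
        nlinarith⟩
    simpa [intervalIntegral.integral_const, smul_eq_mul] using h
  -- rewrite constants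
  have hsqrt2pi : Real.sqrt (2 * Real.pi) = Real.sqrt 2 * Real.sqrt Real.pi :=
    Real.sqrt_mul (by norm_num) _
  have hsqrtm2 : Real.sqrt (-2 * Real.log lam) = Real.sqrt 2 * a := by
    rw [ha_def, ← Real.sqrt_mul (by norm_num)]
    ring_nf
  have hpi : (0:ℝ) < Real.sqrt Real.pi := Real.sqrt_pos.2 Real.pi_pos
  rw [erf, hsqrt2pi, hsqrtm2]
  have hexpand : Real.sqrt 2 * Real.sqrt Real.pi * w *
      ((2 / Real.sqrt Real.pi) * ∫ t in (0:ℝ)..a, Real.exp (-t ^ 2)) -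
      2 * lam * w * (Real.sqrt 2 * a)
      = 2 * Real.sqrt 2 * w * ((∫ t in (0:ℝ)..a, Real.exp (-t ^ 2)) - lam * a) := by
    field_simp
  rw [hexpand]
  have h2 : (0:ℝ) < 2 * Real.sqrt 2 * w := by positivity
  apply mul_pos h2
  rw [hlam_eq]
  linarith [hkey]
end

section
/- For 0 < λ < 1, the interval [c - w√(-2 ln λ), c + w√(-2 ln λ)] is the unique maximizer of J(s,e) = ∫ₛᵉ (f(t) - λ) dt over all pairs s ≤ e, where f(t) = exp(-(t-c)²/(2w²)): for any other pair (s,e) with s ≤ e, J(s,e) < J(s*,e*). -/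
open Real Set intervalIntegral

theorem unique_maximizer (c w lam : ℝ) (hw : 0 < w) (hlam0 : 0 < lam) (hlam1 : lam < 1)
    (f : ℝ → ℝ) (hf : ∀ t, f t = Real.exp (-(t - c)^2 / (2 * w^2)))
    (J : ℝ → ℝ → ℝ)
    (hJ : ∀ s e, J s e = ∫ t in s..e, (f t - lam))
    (d : ℝ) (hd : d = w * Real.sqrt (-2 * Real.log lam)) :
    ∀ s e : ℝ, s ≤ e → (s, e) ≠ (c - d, c + d) → J s e < J (c - d) (c + d) := by
  have hlog : Real.log lam < 0 := Real.log_neg hlam0 hlam1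
  have h2 : (0:ℝ) < -2 * Real.log lam := by linarith
  have hd0 : 0 < d := by
    rw [hd]; exact mul_pos hw (Real.sqrt_pos.mpr h2)
  have hd2 : d ^ 2 = w ^ 2 * (-2 * Real.log lam) := by
    rw [hd, mul_pow, Real.sq_sqrt h2.le]
  set g : ℝ → ℝ := fun t => f t - lam with hg
  have hgc : Continuous g := by
    have : Continuous f := by
      have hfe : f = fun t => Real.exp (-(t - c)^2 / (2 * w^2)) := funext hf
      rw [hfe]; continuity
    exact this.sub continuous_const
  -- sign facts
  have hw2 : (0:ℝ) < 2 * w ^ 2 := by positivity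
  have hsign_pos : ∀ t ∈ Set.Ioo (c - d) (c + d), 0 < g t := by
    intro t ht
    have h1 : (t - c) ^ 2 < d ^ 2 :=
      sq_lt_sq' (by linarith [ht.1]) (by linarith [ht.2])
    have h3 : Real.log lam < -(t - c) ^ 2 / (2 * w ^ 2) := by
      rw [lt_div_iff₀ hw2]; nlinarith
    have : lam < f t := by
      rw [hf t, ← Real.exp_log hlam0]
      exact Real.exp_lt_exp.mpr h3
    simpa [hg] using sub_pos.mpr this
  have hsign_neg : ∀ t : ℝ, d ^ 2 < (t - c) ^ 2 → g t < 0 := by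
    intro t h1
    have h3 : -(t - c) ^ 2 / (2 * w ^ 2) < Real.log lam := by
      rw [div_lt_iff₀ hw2]; nlinarith
    have : f t < lam := by
      rw [hf t, ← Real.exp_log hlam0]
      exact Real.exp_lt_exp.mpr h3
    simpa [hg] using sub_neg.mpr this
  -- the antiderivative
  set G : ℝ → ℝ := fun x => ∫ t in (c - d)..x, g t with hG
  have hint : ∀ a b : ℝ, IntervalIntegrable g MeasureTheory.volume a b :=
    fun a b => hgc.intervalIntegrable a b
  have hderiv : ∀ x : ℝ, HasDerivAt G (g x) x := fun x =>
    intervalIntegral.integral_hasDerivAt_right (hint _ _)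
      hgc.aestronglyMeasurable.stronglyMeasurableAtFilter hgc.continuousAt
  have hGc : Continuous G := by
    have : Differentiable ℝ G := fun x => (hderiv x).differentiableAt
    exact this.continuous
  have hGd : ∀ x, deriv G x = g x := fun x => (hderiv x).deriv
  have hmono : StrictMonoOn G (Set.Icc (c - d) (c + d)) := by
    apply strictMonoOn_of_deriv_pos (convex_Icc _ _) hGc.continuousOn
    intro x hx
    rw [interior_Icc] at hx
    rw [hGd]; exact hsign_pos x hx
  have hanti1 : StrictAntiOn G (Set.Iic (c - d)) := by
    apply strictAntiOn_of_deriv_neg (convex_Iic _) hGc.continuousOn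
    intro x hx
    rw [interior_Iic] at hx
    rw [hGd]
    exact hsign_neg x (by nlinarith [Set.mem_Iio.mp hx])
  have hanti2 : StrictAntiOn G (Set.Ici (c + d)) := by
    apply strictAntiOn_of_deriv_neg (convex_Ici _) hGc.continuousOn
    intro x hx
    rw [interior_Ici] at hx
    rw [hGd]
    exact hsign_neg x (by nlinarith [Set.mem_Ioi.mp hx])
  have hG0 : G (c - d) = 0 := intervalIntegral.integral_same
  have hGpos : 0 < G (c + d) :=
    intervalIntegral.intervalIntegral_pos_of_pos_on (hint _ _) hsign_pos (by linarith)
  -- G x ≤ G (c+d) for x ≥ c-d, strict if x ≠ c+d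
  have hmax : ∀ x, c - d ≤ x → x ≠ c + d → G x < G (c + d) := by
    intro x hx hne
    rcases lt_or_gt_of_ne hne with h | h
    · exact hmono ⟨hx, h.le⟩ ⟨by linarith, le_refl _⟩ h
    · exact hanti2 (Set.mem_Ici.mpr (le_refl _)) h.le h
  have hmax' : ∀ x, c - d ≤ x → G x ≤ G (c + d) := by
    intro x hx
    rcases eq_or_ne x (c + d) with h | h
    · rw [h]
    · exact (hmax x hx h).le
  -- J in terms of G
  have hJG : ∀ s e : ℝ, J s e = G e - G s := by
    intro s e
    rw [hJ s e, hG]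
    exact (intervalIntegral.integral_interval_sub_left (hint _ _) (hint _ _)).symm
  have hJstar : J (c - d) (c + d) = G (c + d) := by
    rw [hJG, hG0, sub_zero]
  intro s e hse hne
  rw [hJG, hJstar]
  have hne' : ¬(s = c - d ∧ e = c + d) := by
    intro ⟨h1, h2⟩; exact hne (by rw [h1, h2])
  rcases lt_trichotomy s (c - d) with hs | hs | hs
  · -- s < c - d, so G s > 0
    have hGs : 0 < G s := by
      rw [← hG0]
      exact hanti1 (Set.mem_Iic.mpr hs.le) (Set.mem_Iic.mpr (le_refl _)) hs
    rcases le_or_gt e (c - d) with he | he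
    · -- e ≤ c - d : G e ≤ G s
      have : G e ≤ G s := by
        rcases eq_or_lt_of_le hse with h | h
        · rw [h]
        · exact (hanti1 (Set.mem_Iic.mpr (hse.trans he)) (Set.mem_Iic.mpr he) h).le
      linarith
    · have := hmax' e he.le
      linarith
  · -- s = c - d
    subst hs
    have he' : e ≠ c + d := fun h => hne' ⟨rfl, h⟩
    have := hmax e hse he'
    rw [hG0]; linarith
  · -- s > c - d
    rcases le_or_gt s (c + d) with hs2 | hs2
    · have hGs : 0 < G s := by
        rw [← hG0]
        exact hmono ⟨le_refl _, by linarith⟩ ⟨hs.le, hs2⟩ hs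
      have := hmax' e (by linarith)
      linarith
    ·
      have hGe : G e ≤ G s := by
        rcases eq_or_lt_of_le hse with h | h
        · rw [h]
        · exact (hanti2 (Set.mem_Ici.mpr hs2.le) (Set.mem_Ici.mpr (by linarith)) h).le
      linarith
end

section
/- If g : ℝ → ℝ is continuous and there exist s* < e* with g(t) > 0 for t ∈ (s*, e*) and g(t) < 0 for t ∉ [s*, e*], then the function (s,e) ↦ ∫ₛᵉ g(t) dt over pairs s ≤ e attains its maximum uniquely at (s*, e*). -/
lemma aux_int_pos {g : ℝ → ℝ} (hg : Continuous g) {a b : ℝ}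
    (h : ∀ t ∈ Set.Ioo a b, 0 < g t) (hab : a < b) :
    0 < ∫ t in a..b, g t :=
  intervalIntegral.intervalIntegral_pos_of_pos_on (hg.intervalIntegrable a b) h hab

lemma aux_int_neg {g : ℝ → ℝ} (hg : Continuous g) {a b : ℝ}
    (h : ∀ t ∈ Set.Ioo a b, g t < 0) (hab : a < b) :
    (∫ t in a..b, g t) < 0 := by
  have := aux_int_pos (g := fun t => -g t) (hg.neg) (fun t ht => by
    simpa using (h t ht)) hab
  have h2 : (∫ t in a..b, -g t) = -∫ t in a..b, g t := by
    simp [intervalIntegral.integral_neg]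
  rw [h2] at this
  linarith

lemma aux_int_nonneg {g : ℝ → ℝ} (hg : Continuous g) {a b : ℝ}
    (h : ∀ t ∈ Set.Ioo a b, 0 < g t) (hab : a ≤ b) :
    0 ≤ ∫ t in a..b, g t := by
  rcases eq_or_lt_of_le hab with rfl | h'
  · simp
  · exact le_of_lt (aux_int_pos hg h h')

lemma aux_int_nonpos {g : ℝ → ℝ} (hg : Continuous g) {a b : ℝ}
    (h : ∀ t ∈ Set.Ioo a b, g t < 0) (hab : a ≤ b) :
    (∫ t in a..b, g t) ≤ 0 := by
  rcases eq_or_lt_of_le hab with rfl | h'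
  · simp
  · exact le_of_lt (aux_int_neg hg h h')

theorem abstract_unique_maximizer (g : ℝ → ℝ) (hg : Continuous g)
    (s' e' : ℝ) (hse : s' < e')
    (hpos : ∀ t, t ∈ Set.Ioo s' e' → 0 < g t)
    (hneg : ∀ t, t ∉ Set.Icc s' e' → g t < 0) :
    ∀ s e : ℝ, s ≤ e → (s, e) ≠ (s', e') →
      (∫ t in s..e, g t) < ∫ t in s'..e', g t := by
  intro s e hsele hne
  have hApos : 0 < ∫ t in s'..e', g t :=
    aux_int_pos hg (fun t ht => hpos t ht) hse
  by_cases hov : s ≤ e' ∧ s' ≤ e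
  · -- overlapping case
    obtain ⟨hse', hs'e⟩ := hov
    set a := max s s' with ha
    set b := min e e' with hb
    have hsa : s ≤ a := le_max_left _ _
    have hs'a : s' ≤ a := le_max_right _ _
    have hbe : b ≤ e := min_le_left _ _
    have hbe' : b ≤ e' := min_le_right _ _
    have hab : a ≤ b := max_le (le_min hsele hse') (le_min hs'e (le_of_lt hse))
    have hae' : a ≤ e' := le_trans hab hbe'
    have hs'b : s' ≤ b := le_trans hs'a hab
    -- decompositions
    have hi : ∀ x y : ℝ, IntervalIntegrable g MeasureTheory.volume x y :=
      fun x y => hg.intervalIntegrable x y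
    have hdec1 : (∫ t in s..e, g t) =
        (∫ t in s..a, g t) + (∫ t in a..b, g t) + (∫ t in b..e, g t) := by
      rw [intervalIntegral.integral_add_adjacent_intervals (hi s a) (hi a b),
        intervalIntegral.integral_add_adjacent_intervals (hi s b) (hi b e)]
    have hdec2 : (∫ t in s'..e', g t) =
        (∫ t in s'..a, g t) + (∫ t in a..b, g t) + (∫ t in b..e', g t) := by
      rw [intervalIntegral.integral_add_adjacent_intervals (hi s' a) (hi a b),
        intervalIntegral.integral_add_adjacent_intervals (hi s' b) (hi b e')]
    -- the four flank integrals
    have h1 : (∫ t in s..a, g t) ≤ 0 := by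
      rcases le_or_gt s' s with h | h
      · have : a = s := by simp [ha, max_eq_left, h]
        simp [this]
      · have haeq : a = s' := max_eq_right (le_of_lt h)
        apply aux_int_nonpos hg _ hsa
        intro t ht
        refine hneg t ?_
        intro hmem
        rw [Set.mem_Icc] at hmem
        rw [haeq] at ht
        exact absurd hmem.1 (not_le.mpr ht.2)
    have h2 : (∫ t in b..e, g t) ≤ 0 := by
      rcases le_or_gt e e' with h | h
      · have : b = e := by simp [hb, min_eq_left, h]
        simp [this]
      · have hbeq : b = e' := min_eq_right (le_of_lt h)
        apply aux_int_nonpos hg _ hbe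
        intro t ht
        refine hneg t ?_
        intro hmem
        rw [Set.mem_Icc] at hmem
        rw [hbeq] at ht
        exact absurd hmem.2 (not_le.mpr ht.1)
    have h3 : 0 ≤ ∫ t in s'..a, g t := by
      apply aux_int_nonneg hg _ hs'a
      intro t ht
      exact hpos t ⟨ht.1, lt_of_lt_of_le ht.2 hae'⟩
    have h4 : 0 ≤ ∫ t in b..e', g t := by
      apply aux_int_nonneg hg _ hbe'
      intro t ht
      exact hpos t ⟨lt_of_le_of_lt hs'b ht.1, ht.2⟩
    -- strictness: s ≠ s' or e ≠ e'
    have hkey : (∫ t in s..a, g t) + (∫ t in b..e, g t)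
        < (∫ t in s'..a, g t) + (∫ t in b..e', g t) := by
      have hne' : s ≠ s' ∨ e ≠ e' := by
        by_contra hc
        push_neg at hc
        exact hne (by rw [hc.1, hc.2])
      rcases hne' with h | h
      · rcases lt_or_gt_of_ne h with hlt | hgt
        · -- s < s', so ∫ s..a < 0
          have haeq : a = s' := max_eq_right (le_of_lt hlt)
          have : (∫ t in s..a, g t) < 0 := by
            apply aux_int_neg hg _ (by rw [haeq]; exact hlt)
            intro t ht
            refine hneg t ?_
            intro hmem
            rw [Set.mem_Icc] at hmem
            rw [haeq] at ht
            exact absurd hmem.1 (not_le.mpr ht.2)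
          linarith
        · -- s' < s, so ∫ s'..a > 0
          have haeq : a = s := max_eq_left (le_of_lt hgt)
          have : 0 < ∫ t in s'..a, g t := by
            apply aux_int_pos hg _ (by rw [haeq]; exact hgt)
            intro t ht
            exact hpos t ⟨ht.1, lt_of_lt_of_le ht.2 hae'⟩
          linarith
      · rcases lt_or_gt_of_ne h with hlt | hgt
        · -- e < e', so ∫ b..e' > 0
          have hbeq : b = e := min_eq_left (le_of_lt hlt)
          have : 0 < ∫ t in b..e', g t := by
            apply aux_int_pos hg _ (by rw [hbeq]; exact hlt)
            intro t ht
            exact hpos t ⟨lt_of_le_of_lt hs'b ht.1, ht.2⟩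
          linarith
        · -- e' < e, so ∫ b..e < 0
          have hbeq : b = e' := min_eq_right (le_of_lt hgt)
          have : (∫ t in b..e, g t) < 0 := by
            apply aux_int_neg hg _ (by rw [hbeq]; exact hgt)
            intro t ht
            refine hneg t ?_
            intro hmem
            rw [Set.mem_Icc] at hmem
            rw [hbeq] at ht
            exact absurd hmem.2 (not_le.mpr ht.1)
          linarith
    rw [hdec1, hdec2]
    linarith
  · -- disjoint case: [s,e] entirely left of s' or right of e'
    push_neg at hov
    have hall : ∀ t ∈ Set.Ioo s e, g t < 0 := by
      intro t ht
      rcases le_or_gt s e' with h | h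
      · have h2 := hov h
        refine hneg t ?_
        intro hmem
        rw [Set.mem_Icc] at hmem
        exact absurd hmem.1 (not_le.mpr (lt_trans ht.2 h2))
      · refine hneg t ?_
        intro hmem
        rw [Set.mem_Icc] at hmem
        exact absurd hmem.2 (not_le.mpr (lt_trans h ht.1))
    calc (∫ t in s..e, g t) ≤ 0 := aux_int_nonpos hg hall hsele
      _ < _ := hApos
end

section
/- The optimal objective value V(λ) = √(2π)·w·erf(√(-ln λ)) - 2λw√(-2 ln λ) is strictly decreasing in λ on (0,1), with V(λ) → √(2π)·w as λ → 0⁺ and V(λ) → 0 as λ → 1⁻. -/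
open Real Filter MeasureTheory

lemma cont_gauss : Continuous fun t : ℝ => Real.exp (-t^2) := by continuity

lemma erf_hasDerivAt (z : ℝ) :
    HasDerivAt erf ((2 / Real.sqrt Real.pi) * Real.exp (-z^2)) z := by
  have h : HasDerivAt (fun u => ∫ t in (0:ℝ)..u, Real.exp (-t^2)) (Real.exp (-z^2)) z :=
    intervalIntegral.integral_hasDerivAt_right
      (cont_gauss.intervalIntegrable _ _)
      (cont_gauss.stronglyMeasurable.stronglyMeasurableAtFilter)
      cont_gauss.continuousAt
  have := h.const_mul (2 / Real.sqrt Real.pi)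
  exact this

lemma sqrt_tendsto_atTop : Tendsto Real.sqrt atTop atTop := by
  exact (tendsto_rpow_atTop (by norm_num : (0:ℝ) < 1/2)).congr
    fun x => (Real.sqrt_eq_rpow x).symm

lemma erf_tendsto_one : Tendsto erf atTop (nhds 1) := by
  have hint : IntegrableOn (fun t : ℝ => Real.exp (-t^2)) (Set.Ioi 0) := by
    have := (integrable_exp_neg_mul_sq (by norm_num : (0:ℝ) < 1)).integrableOn (s := Set.Ioi 0)
    simpa using this
  have h := MeasureTheory.intervalIntegral_tendsto_integral_Ioi 0 hint tendsto_id
  have hval : (∫ t in Set.Ioi (0:ℝ), Real.exp (-t^2)) = Real.sqrt Real.pi / 2 := by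
    have := integral_gaussian_Ioi 1
    simpa using this
  rw [hval] at h
  have := h.const_mul (2 / Real.sqrt Real.pi)
  have heq : (2 / Real.sqrt Real.pi) * (Real.sqrt Real.pi / 2) = 1 := by
    have : Real.sqrt Real.pi ≠ 0 := by positivity
    field_simp
  rw [heq] at this
  exact this.congr (fun z => rfl)

theorem value_strictly_decreasing (w : ℝ) (hw : 0 < w)
    (V : ℝ → ℝ)
    (hV : ∀ lam, V lam = Real.sqrt (2 * Real.pi) * w * erf (Real.sqrt (-Real.log lam)) -
        2 * lam * w * Real.sqrt (-2 * Real.log lam)) :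
    StrictAntiOn V (Set.Ioo 0 1) ∧
    Filter.Tendsto V (nhdsWithin 0 (Set.Ioi 0)) (nhds (Real.sqrt (2 * Real.pi) * w)) ∧
    Filter.Tendsto V (nhdsWithin 1 (Set.Iio 1)) (nhds 0) := by
  have hVeq : V = fun lam => Real.sqrt (2 * Real.pi) * w * erf (Real.sqrt (-Real.log lam)) -
      2 * lam * w * Real.sqrt (-2 * Real.log lam) := funext hV
  subst hVeq
  -- derivative
  have hder : ∀ x ∈ Set.Ioo (0:ℝ) 1,
      HasDerivAt (fun lam => Real.sqrt (2 * Real.pi) * w * erf (Real.sqrt (-Real.log lam)) -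
        2 * lam * w * Real.sqrt (-2 * Real.log lam))
      (-(2 * w * Real.sqrt (-2 * Real.log x))) x := by
    rintro x ⟨hx0, hx1⟩
    have hlogneg : Real.log x < 0 := Real.log_neg hx0 hx1
    have hL : 0 < -Real.log x := by linarith
    have hLne : -Real.log x ≠ 0 := ne_of_gt hL
    have hL2 : 0 < -2 * Real.log x := by linarith
    have hL2ne : -2 * Real.log x ≠ 0 := ne_of_gt hL2
    have hlog := Real.hasDerivAt_log hx0.ne'
    have hneg : HasDerivAt (fun l => -Real.log l) (-x⁻¹) x := hlog.neg
    have hs : HasDerivAt (fun l => Real.sqrt (-Real.log l))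
        (-x⁻¹ / (2 * Real.sqrt (-Real.log x))) x := hneg.sqrt hLne
    have herf : HasDerivAt (fun l => erf (Real.sqrt (-Real.log l)))
        ((2 / Real.sqrt Real.pi) * Real.exp (-(Real.sqrt (-Real.log x))^2) *
          (-x⁻¹ / (2 * Real.sqrt (-Real.log x)))) x :=
      (erf_hasDerivAt _).comp x hs
    have hterm1 := herf.const_mul (Real.sqrt (2 * Real.pi) * w)
    have hlog2 : HasDerivAt (fun l => -2 * Real.log l) (-2 * x⁻¹) x := hlog.const_mul (-2)
    have hs2 : HasDerivAt (fun l => Real.sqrt (-2 * Real.log l))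
        (-2 * x⁻¹ / (2 * Real.sqrt (-2 * Real.log x))) x := hlog2.sqrt hL2ne
    have hmul : HasDerivAt (fun l : ℝ => 2 * l * w) (2 * w) x := by
      have := ((hasDerivAt_id x).const_mul (2:ℝ)).mul_const w
      simpa using this
    have hterm2 := hmul.mul hs2
    have htot := hterm1.sub hterm2
    refine htot.congr_deriv ?_
    symm
    -- algebra
    set s := Real.sqrt (-Real.log x) with hsdef
    have hspos : 0 < s := Real.sqrt_pos.mpr hL
    have hssq : s ^ 2 = -Real.log x := Real.sq_sqrt hL.le
    have hexp : Real.exp (-s ^ 2) = x := by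
      rw [hssq, neg_neg, Real.exp_log hx0]
    have hsqrt2 : Real.sqrt (-2 * Real.log x) = Real.sqrt 2 * s := by
      rw [show -2 * Real.log x = 2 * (-Real.log x) by ring,
        Real.sqrt_mul (by norm_num : (0:ℝ) ≤ 2)]
    have hsqrt2pi : Real.sqrt (2 * Real.pi) = Real.sqrt 2 * Real.sqrt Real.pi :=
      Real.sqrt_mul (by norm_num) _
    have hpi : Real.sqrt Real.pi ≠ 0 := by positivity
    have h2 : Real.sqrt 2 * Real.sqrt 2 = 2 := Real.mul_self_sqrt (by norm_num)
    rw [hexp, hsqrt2, hsqrt2pi]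
    field_simp
    ring_nf
    rw [Real.sq_sqrt (by norm_num : (0:ℝ) ≤ 2)]; ring
  refine ⟨?_, ?_, ?_⟩
  · apply strictAntiOn_of_deriv_neg (convex_Ioo 0 1)
    · exact fun x hx => (hder x hx).continuousAt.continuousWithinAt
    · intro x hx
      rw [interior_Ioo] at hx
      rw [(hder x hx).deriv]
      have hx1 := hx.1
      have hx2 := hx.2
      have hlogneg : Real.log x < 0 := Real.log_neg hx1 hx2
      have : 0 < Real.sqrt (-2 * Real.log x) := Real.sqrt_pos.mpr (by linarith)
      nlinarith
  · -- limit at 0⁺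
    have T1 : Tendsto (fun l => Real.sqrt (2 * Real.pi) * w * erf (Real.sqrt (-Real.log l)))
        (nhdsWithin 0 (Set.Ioi 0)) (nhds (Real.sqrt (2 * Real.pi) * w)) := by
      have hlog : Tendsto (fun l => -Real.log l) (nhdsWithin 0 (Set.Ioi 0)) atTop :=
        tendsto_neg_atBot_atTop.comp Real.tendsto_log_nhdsGT_zero
      have hsq : Tendsto (fun l => Real.sqrt (-Real.log l)) (nhdsWithin 0 (Set.Ioi 0)) atTop :=
        sqrt_tendsto_atTop.comp hlog
      have := erf_tendsto_one.comp hsq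
      have h := this.const_mul (Real.sqrt (2 * Real.pi) * w)
      simpa [Function.comp, mul_comm] using h
    have T2 : Tendsto (fun l => 2 * l * w * Real.sqrt (-2 * Real.log l))
        (nhdsWithin 0 (Set.Ioi 0)) (nhds 0) := by
      have h := tendsto_log_mul_rpow_nhdsGT_zero (by norm_num : (0:ℝ) < 2)
      have h2 : Tendsto (fun l : ℝ => -2 * (Real.log l * l ^ (2:ℝ)))
          (nhdsWithin 0 (Set.Ioi 0)) (nhds 0) := by
        have := h.const_mul (-2:ℝ)
        simpa using this
      have h3 : Tendsto (fun l : ℝ => Real.sqrt (-2 * (Real.log l * l ^ (2:ℝ))))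
          (nhdsWithin 0 (Set.Ioi 0)) (nhds 0) := by
        have := (Real.continuous_sqrt.continuousAt (x := 0)).tendsto.comp h2
        simpa [Function.comp_def] using this
      have h4 := h3.const_mul (2 * w)
      rw [mul_zero] at h4
      apply h4.congr'
      filter_upwards [self_mem_nhdsWithin] with l hl
      have hl0 : 0 < l := hl
      have : -2 * (Real.log l * l ^ (2:ℝ)) = (-2 * Real.log l) * l ^ 2 := by
        rw [show l ^ (2:ℝ) = l ^ (2:ℕ) by
          rw [← Real.rpow_natCast l 2]; norm_num]
        ring
      rw [this, Real.sqrt_mul' _ (by positivity : (0:ℝ) ≤ l^2), Real.sqrt_sq hl0.le]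
      ring
    have := T1.sub T2
    simpa using this
  · -- limit at 1⁻
    have hc : ContinuousAt (fun lam => Real.sqrt (2 * Real.pi) * w * erf (Real.sqrt (-Real.log lam)) -
        2 * lam * w * Real.sqrt (-2 * Real.log lam)) 1 := by
      have hlog : ContinuousAt Real.log 1 := Real.continuousAt_log one_ne_zero
      have hin : ContinuousAt (fun l => Real.sqrt (-Real.log l)) 1 :=
        Real.continuous_sqrt.continuousAt.comp hlog.neg
      have herf : ContinuousAt (fun l => erf (Real.sqrt (-Real.log l))) 1 :=
        (erf_hasDerivAt _).continuousAt.comp hin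
      have hin2 : ContinuousAt (fun l => Real.sqrt (-2 * Real.log l)) 1 :=
        Real.continuous_sqrt.continuousAt.comp (hlog.const_mul (-2))
      exact ((continuousAt_const.mul herf)).sub
        (((continuousAt_const.mul continuousAt_id).mul continuousAt_const).mul hin2)
    have h := (hc.continuousWithinAt (s := Set.Iio 1)).tendsto
    have hval : Real.sqrt (2 * Real.pi) * w * erf (Real.sqrt (-Real.log 1)) -
        2 * 1 * w * Real.sqrt (-2 * Real.log 1) = 0 := by
      simp [Real.log_one, erf, intervalIntegral.integral_same]
    rw [hval] at h
    exact h
end
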